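/- Let D be a division ring with center F = Z(D). Then there exist a division ring E, an injective ring homomorphism ι : D → E, and a nonzero element t ∈ E such that: (i) t commutes with ι(a) for every a ∈ D; (ii) the center of E is exactly ι(F); and (iii) for all u, v ∈ D with v ≠ 0, the element ι(u) + ι(v)t of E is not algebraic over the center of E. -/

import Mathlib

open Finset Function

noncomputable section Level1

namespace SLS1

variable {Γ R : Type*}

open HahnSeries

section powers

variable [AddCommMonoid Γ] [LinearOrder Γ] [IsOrderedCancelAddMonoid Γ] [Ring R] [IsDomain R]

/-- The powers of an element of positive valuation form a summable family. -/
@[simps]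
def powers (x : HahnSeries Γ R) (hx : 0 < x.orderTop) : SummableFamily Γ R ℕ where
  toFun n := x ^ n
  isPWO_iUnion_support' := SummableFamily.isPWO_iUnion_support_powers (zero_le_orderTop_iff.mp <| le_of_lt hx)
  finite_co_support' g := by
    have hpwo := SummableFamily.isPWO_iUnion_support_powers (zero_le_orderTop_iff.mp <| le_of_lt hx)
    by_cases hg : g ∈ ⋃ n : ℕ, { g | (x ^ n).coeff g ≠ 0 }
    swap; · exact Set.finite_empty.subset fun n hn => hg (Set.mem_iUnion.2 ⟨n, hn⟩)
    apply hpwo.isWF.induction hg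
    intro y ys hy
    refine
      ((((antidiagonal x.isPWO_support hpwo y).finite_toSet.biUnion fun ij hij =>
                    hy ij.snd ?_ ?_).image
                Nat.succ).union
            (Set.finite_singleton 0)).subset
        ?_
    · exact (mem_antidiagonal.1 (mem_coe.1 hij)).2.1
    · obtain ⟨hi, _, rfl⟩ := mem_antidiagonal.1 (mem_coe.1 hij)
      rw [← zero_add ij.snd, ← add_assoc, add_zero]
      exact
        add_lt_add_left (WithTop.coe_lt_coe.1 (hx.trans_le (orderTop_le_of_coeff_ne_zero hi)))
          _
    · rintro (_ | n) hn
      · exact Set.mem_union_right _ (Set.mem_singleton 0)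
      · obtain ⟨i, hi, j, hj, rfl⟩ := support_mul_subset hn
        refine Set.mem_union_left _ ⟨n, Set.mem_iUnion.2 ⟨⟨j, i⟩, Set.mem_iUnion.2 ⟨?_, hi⟩⟩, rfl⟩
        simp only [Set.mem_iUnion, Finset.mem_antidiagonal, mem_coe, eq_self_iff_true, Ne, HahnSeries.mem_support,
          Set.mem_setOf_eq]
        exact ⟨hj, ⟨n, hi⟩, add_comm j i⟩

variable {x : HahnSeries Γ R} (hx : 0 < x.orderTop)

@[simp]
theorem coe_powers : ⇑(powers x hx) = HPow.hPow x :=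
  rfl

open SummableFamily in
theorem embDomain_succ_smul_powers :
    (x • powers x hx).embDomain ⟨Nat.succ, Nat.succ_injective⟩ =
      powers x hx - SummableFamily.ofFinsupp (Finsupp.single 0 1) := by
  apply SummableFamily.ext
  rintro (_ | n)
  · rw [SummableFamily.embDomain_notin_range, SummableFamily.sub_apply, coe_powers, pow_zero, coe_ofFinsupp,
      Finsupp.single_eq_same, sub_self]
    rw [Set.mem_range, not_exists]
    exact Nat.succ_ne_zero
  · refine Eq.trans (embDomain_image _ ⟨Nat.succ, Nat.succ_injective⟩) ?_
    rw [SummableFamily.smul_apply, powers_toFun, SummableFamily.coe_sub, coe_powers, Pi.sub_apply, coe_ofFinsupp, pow_succ',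
      Finsupp.single_eq_of_ne' (Nat.zero_ne_add_one n), sub_zero, HahnSeries.of_symm_smul_of_eq_mul]

open SummableFamily in
theorem one_sub_self_mul_hsum_powers : (1 - x) * (powers x hx).hsum = 1 := by
  rw [← hsum_smul, sub_smul 1 x (powers x hx), one_smul, hsum_sub, ←
    hsum_embDomain (x • powers x hx) ⟨Nat.succ, Nat.succ_injective⟩, embDomain_succ_smul_powers]
  simp

end powers

section Inversion

variable [AddCommGroup Γ] [LinearOrder Γ] [IsOrderedAddMonoid Γ] [DivisionRing R]

theorem unit_aux (x : HahnSeries Γ R) {r : R} (hr : r * x.leadingCoeff = 1) :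
    0 < (1 - single (-x.order) r * x).orderTop := by
  by_cases hx : x = 0; · simp_all [hx]
  have hrz : r ≠ 0 := by
    intro h
    rw [h, zero_mul] at hr
    exact (zero_ne_one' R) hr
  refine lt_of_le_of_ne (le_trans ?_ min_orderTop_le_orderTop_sub) fun h => ?_
  · refine le_min (by rw [orderTop_one]) ?_
    refine le_trans ?_ orderTop_add_le_mul
    by_cases h : x = 0; · simp [h]
    rw [← order_eq_orderTop_of_ne_zero h, orderTop_single
      (fun _ => by simp_all only [zero_mul, zero_ne_one]), ← @WithTop.coe_add,
      WithTop.coe_nonneg, neg_add_cancel]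
  · apply coeff_orderTop_ne h.symm
    simp only [C_apply, single_mul_single, zero_add, mul_one, coeff_sub', Pi.sub_apply, coeff_one,
      ↓reduceIte]
    have hrc := coeff_mul_order_add_order ((single (-x.order)) r) x
    rw [order_single hrz, leadingCoeff_of_single, neg_add_cancel, hr] at hrc
    rw [hrc, sub_self]

theorem hahn_left_inv (x : HahnSeries Γ R) (hx : x ≠ 0) :
    ((powers _ (unit_aux x (inv_mul_cancel₀ (leadingCoeff_ne_zero.mpr hx)))).hsum *
      single (-x.order) (x.leadingCoeff)⁻¹) * x = 1 := by
  have h := one_sub_self_mul_hsum_powers (unit_aux x (inv_mul_cancel₀ (leadingCoeff_ne_zero.mpr hx)))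
  rw [sub_sub_cancel] at h
  -- h : (single (-x.order) lc⁻¹ * x) * S = 1
  -- want (S * single) * x = 1
  have h2 : ∀ a b : HahnSeries Γ R, a * b = 1 → b * a = 1 := by
    intro a b hab
    have hb : b ≠ 0 := by rintro rfl; rw [mul_zero] at hab; exact one_ne_zero hab.symm
    have : (b * a - 1) * b = 0 := by
      rw [sub_mul, one_mul, mul_assoc, hab, mul_one, sub_self]
    rcases mul_eq_zero.mp this with h' | h'
    · exact sub_eq_zero.mp h'
    · exact absurd h' hb
  have := h2 _ _ h
  rwa [← mul_assoc] at this

open Classical in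
/-- Division ring structure on Hahn series over a division ring. -/
@[reducible]
def hahnDivisionRing : DivisionRing (HahnSeries Γ R) where
  __ : Ring (HahnSeries Γ R) := inferInstance
  __ : Nontrivial (HahnSeries Γ R) := inferInstance
  inv x :=
    if x0 : x = 0 then 0
    else
      (powers _ (unit_aux x (inv_mul_cancel₀ (leadingCoeff_ne_zero.mpr x0)))).hsum *
        single (-x.order) (x.leadingCoeff)⁻¹
  inv_zero := dif_pos rfl
  mul_inv_cancel x x0 := (congr rfl (dif_neg x0)).trans <| by
    have h := hahn_left_inv x x0
    have h2 : ∀ a b : HahnSeries Γ R, a * b = 1 → b * a = 1 := by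
      intro a b hab
      have hb : b ≠ 0 := by rintro rfl; rw [mul_zero] at hab; exact one_ne_zero hab.symm
      have : (b * a - 1) * b = 0 := by
        rw [sub_mul, one_mul, mul_assoc, hab, mul_one, sub_self]
      rcases mul_eq_zero.mp this with h' | h'
      · exact sub_eq_zero.mp h'
      · exact absurd h' hb
    exact h2 _ _ h
  nnratCast q := (q.num : HahnSeries Γ R) *
    (if x0 : (q.den : HahnSeries Γ R) = 0 then 0
    else
      (powers _ (unit_aux _ (inv_mul_cancel₀ (leadingCoeff_ne_zero.mpr x0)))).hsum *
        single (-(q.den : HahnSeries Γ R).order) ((q.den : HahnSeries Γ R).leadingCoeff)⁻¹)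
  nnratCast_def := fun _ => rfl
  ratCast q := (q.num : HahnSeries Γ R) *
    (if x0 : (q.den : HahnSeries Γ R) = 0 then 0
    else
      (powers _ (unit_aux _ (inv_mul_cancel₀ (leadingCoeff_ne_zero.mpr x0)))).hsum *
        single (-(q.den : HahnSeries Γ R).order) ((q.den : HahnSeries Γ R).leadingCoeff)⁻¹)
  ratCast_def := fun _ => rfl
  nnqsmul := _
  nnqsmul_def := fun _ _ => rfl
  qsmul := _
  qsmul_def := fun _ _ => rfl

end Inversion

end SLS1

noncomputable section Level2

open Finset

/-- Skew Laurent series over `A` twisted by `σ`. -/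
@[ext]
structure SLS (A : Type) [DivisionRing A] (σ : RingAut A) : Type where
  c : ℤ → A
  bdd : ∃ N : ℤ, ∀ n < N, c n = 0

namespace SLS

variable {A : Type} [DivisionRing A] {σ : RingAut A}

instance : Zero (SLS A σ) := ⟨⟨0, ⟨0, fun _ _ => rfl⟩⟩⟩
instance : Add (SLS A σ) :=
  ⟨fun f g => ⟨f.c + g.c, by
    obtain ⟨N, hN⟩ := f.bdd; obtain ⟨M, hM⟩ := g.bdd
    exact ⟨min N M, fun n hn => by
      simp [hN n (lt_of_lt_of_le hn (min_le_left _ _)),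
        hM n (lt_of_lt_of_le hn (min_le_right _ _))]⟩⟩⟩
instance : Neg (SLS A σ) :=
  ⟨fun f => ⟨-f.c, by obtain ⟨N, hN⟩ := f.bdd; exact ⟨N, fun n hn => by simp [hN n hn]⟩⟩⟩

@[simp] theorem zero_c (n : ℤ) : (0 : SLS A σ).c n = 0 := rfl
@[simp] theorem add_c (f g : SLS A σ) (n : ℤ) : (f + g).c n = f.c n + g.c n := rfl
@[simp] theorem neg_c (f : SLS A σ) (n : ℤ) : (-f).c n = -f.c n := rfl

instance : AddCommGroup (SLS A σ) where
  add_assoc f g h := by ext n; simp [add_assoc]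
  zero_add f := by ext n; simp
  add_zero f := by ext n; simp
  add_comm f g := by ext n; simp [add_comm]
  neg_add_cancel f := by ext n; simp
  nsmul := nsmulRec
  zsmul := zsmulRec

/-- `single m a` : the series `a · tᵐ`. -/
def single (m : ℤ) (a : A) : SLS A σ :=
  ⟨fun n => if n = m then a else 0, ⟨m, fun n hn => if_neg (by omega)⟩⟩

@[simp] theorem single_c (m : ℤ) (a : A) (n : ℤ) :
    (single m a : SLS A σ).c n = if n = m then a else 0 := rfl

instance : One (SLS A σ) := ⟨single 0 1⟩

theorem one_def : (1 : SLS A σ) = single 0 1 := rfl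

@[simp] theorem one_c (n : ℤ) : (1 : SLS A σ).c n = if n = 0 then 1 else 0 := rfl

theorem single_zero (m : ℤ) : (single m (0 : A) : SLS A σ) = 0 := by
  ext n; simp

/-- The term function appearing in the product. -/
def mterm (f g : SLS A σ) (n : ℤ) : ℤ → A := fun i => f.c i * (σ ^ i) (g.c (n - i))

theorem mterm_support_subset (f g : SLS A σ) (n : ℤ) {a b : ℤ}
    (ha : ∀ m < a, f.c m = 0) (hb : ∀ m < b, g.c m = 0) :
    Function.support (mterm f g n) ⊆ Set.Icc a (n - b) := by
  intro i hi
  simp only [Function.mem_support, mterm] at hi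
  constructor
  · by_contra h
    exact hi (by rw [ha i (by omega), zero_mul])
  · by_contra h
    refine hi ?_
    rw [hb (n - i) (by omega), map_zero, mul_zero]

theorem mterm_support_finite (f g : SLS A σ) (n : ℤ) :
    (Function.support (mterm f g n)).Finite := by
  obtain ⟨N, hN⟩ := f.bdd; obtain ⟨M, hM⟩ := g.bdd
  exact (Set.finite_Icc _ _).subset (mterm_support_subset f g n hN hM)

instance : Mul (SLS A σ) :=
  ⟨fun f g => ⟨fun n => ∑ᶠ i, mterm f g n i, by
    obtain ⟨N, hN⟩ := f.bdd; obtain ⟨M, hM⟩ := g.bdd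
    refine ⟨N + M, fun n hn => ?_⟩
    apply finsum_eq_zero_of_forall_eq_zero
    intro i
    by_contra h
    have := mterm_support_subset f g n hN hM (show i ∈ Function.support (mterm f g n) from h)
    simp only [Set.mem_Icc] at this
    omega⟩⟩

theorem mul_c (f g : SLS A σ) (n : ℤ) : (f * g).c n = ∑ᶠ i, f.c i * (σ ^ i) (g.c (n - i)) := rfl

theorem mul_c_eq_sum (f g : SLS A σ) {a b : ℤ} (ha : ∀ m < a, f.c m = 0)
    (hb : ∀ m < b, g.c m = 0) (n : ℤ) :
    (f * g).c n = ∑ i ∈ Finset.Icc a (n - b), f.c i * (σ ^ i) (g.c (n - i)) := by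
  rw [mul_c]
  refine finsum_eq_finset_sum_of_support_subset _ ?_
  intro i hi
  have := mterm_support_subset f g n ha hb hi
  simp only [Set.mem_Icc] at this
  simp only [Finset.coe_Icc, Set.mem_Icc]
  exact this

theorem single_mul (m : ℤ) (a : A) (f : SLS A σ) (n : ℤ) :
    ((single m a : SLS A σ) * f).c n = a * (σ ^ m) (f.c (n - m)) := by
  rw [mul_c]
  rw [finsum_eq_single _ m]
  · simp
  · intro i hi
    simp [single_c, if_neg hi]

theorem mul_single (m : ℤ) (a : A) (f : SLS A σ) (n : ℤ) :
    (f * (single m a : SLS A σ)).c n = f.c (n - m) * (σ ^ (n - m)) a := by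
  rw [mul_c]
  rw [finsum_eq_single _ (n - m)]
  · simp
  · intro i hi
    have : n - i ≠ m := by omega
    simp [single_c, if_neg this]

theorem zpow_apply_apply (σ : RingAut A) (i j : ℤ) (x : A) :
    (σ ^ i) ((σ ^ j) x) = (σ ^ (i + j)) x := by
  rw [zpow_add]; rfl

theorem one_mul' (f : SLS A σ) : 1 * f = f := by
  ext n; rw [one_def, single_mul]
  simp only [zpow_zero, one_mul, sub_zero]
  rfl

theorem mul_one' (f : SLS A σ) : f * 1 = f := by
  ext n; rw [one_def, mul_single]; simp

theorem single_mul_single (m k : ℤ) (a b : A) :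
    (single m a : SLS A σ) * single k b = single (m + k) (a * (σ ^ m) b) := by
  ext n
  rw [single_mul]
  by_cases h : n = m + k
  · have : n - m = k := by omega
    simp [this, h]
  · have : n - m ≠ k := by omega
    simp [if_neg this, if_neg h]

theorem zero_mul' (f : SLS A σ) : (0 : SLS A σ) * f = 0 := by
  ext n
  rw [mul_c]
  simp

theorem mul_zero' (f : SLS A σ) : f * (0 : SLS A σ) = 0 := by
  ext n
  rw [mul_c]
  simp

theorem left_distrib' (f g h : SLS A σ) : f * (g + h) = f * g + f * h := by
  ext n
  obtain ⟨a, ha⟩ := f.bdd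
  obtain ⟨b1, hb1⟩ := g.bdd
  obtain ⟨b2, hb2⟩ := h.bdd
  have hb : ∀ m < min b1 b2, (g + h).c m = 0 := fun m hm => by
    simp [hb1 m (lt_of_lt_of_le hm (min_le_left _ _)),
      hb2 m (lt_of_lt_of_le hm (min_le_right _ _))]
  have hg : ∀ m < min b1 b2, g.c m = 0 := fun m hm =>
    hb1 m (lt_of_lt_of_le hm (min_le_left _ _))
  have hh : ∀ m < min b1 b2, h.c m = 0 := fun m hm =>
    hb2 m (lt_of_lt_of_le hm (min_le_right _ _))
  rw [add_c, mul_c_eq_sum f _ ha hb, mul_c_eq_sum f g ha hg, mul_c_eq_sum f h ha hh,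
    ← Finset.sum_add_distrib]
  refine Finset.sum_congr rfl fun i _ => ?_
  simp [map_add, mul_add]

theorem right_distrib' (f g h : SLS A σ) : (f + g) * h = f * h + g * h := by
  ext n
  obtain ⟨a1, ha1⟩ := f.bdd
  obtain ⟨a2, ha2⟩ := g.bdd
  obtain ⟨b, hb⟩ := h.bdd
  have haf : ∀ m < min a1 a2, f.c m = 0 := fun m hm =>
    ha1 m (lt_of_lt_of_le hm (min_le_left _ _))
  have hag : ∀ m < min a1 a2, g.c m = 0 := fun m hm =>
    ha2 m (lt_of_lt_of_le hm (min_le_right _ _))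
  have ha : ∀ m < min a1 a2, (f + g).c m = 0 := fun m hm => by
    simp [haf m hm, hag m hm]
  rw [add_c, mul_c_eq_sum _ h ha hb, mul_c_eq_sum f h haf hb, mul_c_eq_sum g h hag hb,
    ← Finset.sum_add_distrib]
  refine Finset.sum_congr rfl fun i _ => ?_
  simp [add_mul]

theorem mul_assoc' (f g h : SLS A σ) : f * g * h = f * (g * h) := by
  ext n
  obtain ⟨a, ha⟩ := f.bdd
  obtain ⟨b, hb⟩ := g.bdd
  obtain ⟨c, hc⟩ := h.bdd
  have hfg : ∀ m < a + b, (f * g).c m = 0 := fun m hm => by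
    rw [mul_c_eq_sum f g ha hb]
    apply Finset.sum_eq_zero
    intro i hi
    simp only [Finset.mem_Icc] at hi
    rw [hb (m - i) (by omega), map_zero, mul_zero]
  have hgh : ∀ m < b + c, (g * h).c m = 0 := fun m hm => by
    rw [mul_c_eq_sum g h hb hc]
    apply Finset.sum_eq_zero
    intro i hi
    simp only [Finset.mem_Icc] at hi
    rw [hc (m - i) (by omega), map_zero, mul_zero]
  rw [mul_c_eq_sum (f * g) h hfg hc, mul_c_eq_sum f (g * h) ha hgh]
  -- LHS : ∑ k ∈ Icc (a+b) (n-c), (f*g).c k * σ^k (h.c (n-k))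
  -- RHS : ∑ i ∈ Icc a (n-b-c), f.c i * σ^i ((g*h).c (n-i))
  have LHS : ∑ k ∈ Finset.Icc (a + b) (n - c), (f * g).c k * (σ ^ k) (h.c (n - k)) =
      ∑ k ∈ Finset.Icc (a + b) (n - c), ∑ i ∈ Finset.Icc a (n - c - b),
        f.c i * (σ ^ i) (g.c (k - i)) * (σ ^ k) (h.c (n - k)) := by
    refine Finset.sum_congr rfl fun k hk => ?_
    simp only [Finset.mem_Icc] at hk
    rw [mul_c_eq_sum f g ha hb, Finset.sum_mul]
    refine Finset.sum_subset (Finset.Icc_subset_Icc le_rfl (by omega)) ?_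
    intro i hi hni
    simp only [Finset.mem_Icc] at hi hni
    rw [hb (k - i) (by omega), map_zero, mul_zero, zero_mul]
  have RHS : ∑ i ∈ Finset.Icc a (n - (b + c)), f.c i * (σ ^ i) ((g * h).c (n - i)) =
      ∑ i ∈ Finset.Icc a (n - c - b), ∑ j ∈ Finset.Icc b (n - i - c),
        f.c i * (σ ^ i) (g.c j) * (σ ^ (i + j)) (h.c (n - i - j)) := by
    refine Finset.sum_congr (by rw [show n - (b + c) = n - c - b from by omega]) fun i _ => ?_
    rw [mul_c_eq_sum g h hb hc, map_sum, Finset.mul_sum]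
    refine Finset.sum_congr rfl fun j _ => ?_
    rw [map_mul, ← mul_assoc, zpow_apply_apply]
  rw [LHS, RHS, Finset.sum_comm]
  refine Finset.sum_congr rfl fun i hi => ?_
  simp only [Finset.mem_Icc] at hi
  -- reindex k = i + j
  rw [show Finset.Icc (a + b) (n - c) = Finset.map (addLeftEmbedding i)
      (Finset.Icc (a + b - i) (n - c - i)) from ?_]
  · rw [Finset.sum_map]
    refine (Finset.sum_subset (Finset.Icc_subset_Icc (by omega) (by omega)) ?_).symm.trans
      (Finset.sum_congr rfl fun j hj => ?_)
    · intro j hj hnj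
      simp only [Finset.mem_Icc] at hj hnj
      simp only [addLeftEmbedding_apply]
      rw [hb (i + j - i) (by omega), map_zero, mul_zero, zero_mul]
    · simp only [addLeftEmbedding_apply]
      rw [show i + j - i = j from by omega, show n - (i + j) = n - i - j from by omega]
  · ext k
    simp only [Finset.mem_Icc, Finset.mem_map, addLeftEmbedding_apply]
    constructor
    · intro hk; exact ⟨k - i, by omega, by omega⟩
    · rintro ⟨j, hj, rfl⟩; omega

instance instRing : Ring (SLS A σ) where
  __ : AddCommGroup (SLS A σ) := inferInstance
  mul_assoc := mul_assoc'
  one_mul := one_mul'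
  mul_one := mul_one'
  left_distrib := left_distrib'
  right_distrib := right_distrib'
  zero_mul := zero_mul'
  mul_zero := mul_zero'

instance : Nontrivial (SLS A σ) :=
  ⟨1, 0, fun h => by simpa using congrArg (fun f => SLS.c f 0) h⟩

theorem zpow_ne_zero_iff (i : ℤ) (x : A) : (σ ^ i) x ≠ 0 ↔ x ≠ 0 := by
  constructor
  · intro h hx; exact h (by rw [hx, map_zero])
  · intro hx h
    exact hx ((σ ^ i).injective (by rw [h, map_zero]))

theorem ne_zero_iff' {f : SLS A σ} : f ≠ 0 ↔ ∃ n, f.c n ≠ 0 := by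
  constructor
  · intro hf
    by_contra h
    push_neg at h
    exact hf (by ext n; simpa using h n)
  · rintro ⟨n, hn⟩ rfl
    exact hn rfl

open Classical in
theorem exists_min (f : SLS A σ) (hf : f ≠ 0) :
    ∃ m : ℤ, f.c m ≠ 0 ∧ ∀ k < m, f.c k = 0 := by
  obtain ⟨N, hN⟩ := f.bdd
  obtain ⟨lb, h1, h2⟩ := Int.exists_least_of_bdd (P := fun z => f.c z ≠ 0)
    ⟨N, fun z hz => by by_contra h; exact hz (hN z (by omega))⟩ (ne_zero_iff'.mp hf)
  exact ⟨lb, h1, fun k hk => by by_contra h; exact absurd (h2 k h) (by omega)⟩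

theorem mul_ne_zero'' {f g : SLS A σ} (hf : f ≠ 0) (hg : g ≠ 0) : f * g ≠ 0 := by
  obtain ⟨mf, hf1, hf2⟩ := exists_min f hf
  obtain ⟨mg, hg1, hg2⟩ := exists_min g hg
  apply ne_zero_iff'.mpr
  refine ⟨mf + mg, ?_⟩
  rw [mul_c_eq_sum f g hf2 hg2, show mf + mg - mg = mf from by omega, Finset.Icc_self,
    Finset.sum_singleton, show mf + mg - mf = mg from by omega]
  exact mul_ne_zero hf1 ((zpow_ne_zero_iff mf _).mpr hg1)

/-- Coefficients of the left inverse of a series with constant coefficient 1 and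
no negative terms. -/
def invC (f : SLS A σ) : ℕ → A
  | 0 => 1
  | (n+1) => -∑ i ∈ (Finset.range (n+1)).attach,
      invC f i.1 * (σ ^ (i.1 : ℤ)) (f.c ((n : ℤ) + 1 - (i.1 : ℤ)))
termination_by n => n
decreasing_by exact Finset.mem_range.mp i.2

theorem invC_succ (f : SLS A σ) (n : ℕ) :
    invC f (n+1) = -∑ i ∈ Finset.range (n+1),
      invC f i * (σ ^ (i : ℤ)) (f.c ((n : ℤ) + 1 - (i : ℤ))) := by
  rw [invC, ← Finset.sum_attach (Finset.range (n+1))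
    (fun i => invC f i * (σ ^ (i : ℤ)) (f.c ((n : ℤ) + 1 - (i : ℤ))))]

/-- The left inverse of a series with constant coefficient 1 and no negative terms. -/
def linv (f : SLS A σ) : SLS A σ :=
  ⟨fun z => if 0 ≤ z then invC f z.toNat else 0, ⟨0, fun n hn => if_neg (by omega)⟩⟩

theorem linv_mul (f : SLS A σ) (h0 : f.c 0 = 1) (hneg : ∀ n < 0, f.c n = 0) :
    linv f * f = 1 := by
  ext n
  rw [mul_c_eq_sum (a := 0) (b := 0) (linv f) f (fun m hm => if_neg (by omega)) (fun m hm => hneg m hm)]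
  by_cases hn : 0 ≤ n
  · have hIcc : Finset.Icc (0:ℤ) (n - 0) = (Finset.range (n.toNat + 1)).map
        ⟨(fun j : ℕ => (j : ℤ)), Nat.cast_injective⟩ := by
      ext k
      simp only [Finset.mem_Icc, Finset.mem_map, Finset.mem_range, Function.Embedding.coeFn_mk]
      constructor
      · intro hk; exact ⟨k.toNat, by omega, by omega⟩
      · rintro ⟨j, hj, rfl⟩; omega
    rw [hIcc, Finset.sum_map]
    simp only [Function.Embedding.coeFn_mk]
    have hlc : ∀ j : ℕ, (linv f).c (j : ℤ) = invC f j := fun j => by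
      simp [linv, Int.toNat_natCast]
    rcases Nat.eq_zero_or_pos n.toNat with h | h
    · have hn0 : n = 0 := by omega
      subst hn0
      rw [h]
      rw [Finset.range_one, Finset.sum_singleton]
      have h00 : (linv f).c ((0:ℕ):ℤ) = invC f 0 := hlc 0
      simp only [Nat.cast_zero] at h00
      simp only [Nat.cast_zero, zpow_zero, sub_zero, h00]
      simp [invC, h0]
    · obtain ⟨m, hm⟩ := Nat.exists_eq_add_of_lt h
      rw [show n.toNat = m + 1 from by omega]
      rw [Finset.sum_range_succ, hlc (m+1)]
      have hnm : n = ((m : ℤ) + 1) := by omega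
      have hfc0 : f.c (n - ((m+1 : ℕ) : ℤ)) = 1 := by
        rw [show n - ((m+1 : ℕ) : ℤ) = 0 from by omega]; exact h0
      rw [hfc0, map_one, mul_one, invC_succ]
      have : ∑ x ∈ Finset.range (m + 1), (linv f).c (x : ℤ) * (σ ^ (x:ℤ)) (f.c (n - (x:ℤ)))
          = ∑ i ∈ Finset.range (m + 1), invC f i * (σ ^ (i : ℤ)) (f.c ((m : ℤ) + 1 - (i : ℤ))) := by
        refine Finset.sum_congr rfl fun i _ => ?_
        rw [hlc i, hnm]
      rw [this, one_c, if_neg (by omega)]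
      exact add_neg_cancel _
  · rw [Finset.Icc_eq_empty (by omega), Finset.sum_empty, one_c, if_neg (by omega)]

theorem exists_left_inv (f : SLS A σ) (hf : f ≠ 0) : ∃ g : SLS A σ, g * f = 1 := by
  obtain ⟨m, hm1, hm2⟩ := exists_min f hf
  set b := ((σ ^ (-m)) (f.c m))⁻¹ with hb
  set f' := (single (-m) b : SLS A σ) * f with hf'
  have hcoef : ∀ n : ℤ, f'.c n = b * (σ ^ (-m)) (f.c (n + m)) := by
    intro n
    rw [hf', single_mul, show n - (-m) = n + m from by omega]
  have h'0 : f'.c 0 = 1 := by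
    rw [hcoef 0, zero_add, hb]
    exact inv_mul_cancel₀ ((zpow_ne_zero_iff (-m) _).mpr hm1)
  have h'neg : ∀ n < 0, f'.c n = 0 := fun n hn => by
    rw [hcoef n, hm2 (n + m) (by omega), map_zero, mul_zero]
  refine ⟨linv f' * single (-m) b, ?_⟩
  rw [mul_assoc, ← hf', linv_mul f' h'0 h'neg]

theorem mul_eq_one_comm {f g : SLS A σ} (h : f * g = 1) : g * f = 1 := by
  have hg : g ≠ 0 := by
    rintro rfl; rw [mul_zero] at h; exact one_ne_zero h.symm
  have h2 : (g * f - 1) * g = 0 := by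
    rw [sub_mul, one_mul, mul_assoc, h, mul_one, sub_self]
  by_contra hne
  exact mul_ne_zero'' (fun hz => hne (by rwa [sub_eq_zero] at hz)) hg h2

open Classical in
instance instDivisionRing : DivisionRing (SLS A σ) where
  __ : Ring (SLS A σ) := inferInstance
  __ : Nontrivial (SLS A σ) := inferInstance
  inv f := if h : f = 0 then 0 else Classical.choose (exists_left_inv f h)
  inv_zero := dif_pos rfl
  mul_inv_cancel f hf := (congr rfl (dif_neg hf)).trans <| by
    exact mul_eq_one_comm (Classical.choose_spec (exists_left_inv f hf))
  nnqsmul := _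
  nnqsmul_def := fun _ _ => rfl
  qsmul := _
  qsmul_def := fun _ _ => rfl



section Center

@[simp] theorem ringAut_one_apply (x : A) : (1 : RingAut A) x = x := rfl

theorem zpow_fixed {x : A} (hx : σ x = x) (n : ℤ) : (σ ^ n) x = x := by
  have hinv : σ⁻¹ x = x := by
    conv_lhs => rw [← hx]
    exact σ.symm_apply_apply x
  induction n using Int.induction_on with
  | zero => simp
  | succ k ih =>
      rw [show ((k:ℤ) + 1) = k + 1 from rfl, ← zpow_apply_apply σ k 1, zpow_one, hx, ih]
  | pred k ih =>
      rw [show (-(k:ℤ) - 1) = -k + (-1) from by omega, ← zpow_apply_apply σ (-k) (-1),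
        zpow_neg_one, hinv, ih]

/-- The constant-embedding ring homomorphism. -/
def Cmap : A →+* SLS A σ where
  toFun a := single 0 a
  map_one' := rfl
  map_mul' a b := by
    rw [single_mul_single]
    simp
  map_zero' := single_zero 0
  map_add' a b := by ext n; simp [single_c]; split <;> simp

@[simp] theorem Cmap_c (a : A) (n : ℤ) : (Cmap a : SLS A σ).c n = if n = 0 then a else 0 := rfl

theorem Cmap_injective : Function.Injective (Cmap : A →+* SLS A σ) := by
  intro a b h
  have := congrArg (fun f => SLS.c f 0) h
  simpa using this

theorem Cmap_mul_c (a : A) (f : SLS A σ) (n : ℤ) : (Cmap a * f).c n = a * f.c n := by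
  rw [show (Cmap a : SLS A σ) = single 0 a from rfl, single_mul]
  simp

theorem mul_Cmap_c (a : A) (f : SLS A σ) (n : ℤ) : (f * Cmap a).c n = f.c n * (σ ^ n) a := by
  rw [show (Cmap a : SLS A σ) = single 0 a from rfl, mul_single]
  simp

/-- The skew variable `t`. -/
def T : SLS A σ := single 1 1

theorem T_ne_zero : (T : SLS A σ) ≠ 0 := by
  intro h
  have := congrArg (fun f => SLS.c f 1) h
  simpa [T] using this

theorem T_mul_c (f : SLS A σ) (n : ℤ) : (T * f).c n = σ (f.c (n - 1)) := by
  rw [T, single_mul]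
  simp

theorem mul_T_c (f : SLS A σ) (n : ℤ) : (f * T).c n = f.c (n - 1) := by
  rw [T, mul_single]
  simp

theorem T_comm (a : A) (ha : σ a = a) : T * (Cmap a : SLS A σ) = Cmap a * T := by
  ext n
  rw [T_mul_c, mul_T_c]
  by_cases h : n - 1 = 0
  · simp [h, ha]
  · simp [h]

theorem mem_center_iff (hσ : ∀ n : ℤ, n ≠ 0 → ∃ z ∈ Subring.center A, (σ ^ n) z ≠ z)
    (f : SLS A σ) :
    f ∈ Subring.center (SLS A σ) ↔
      (∀ n : ℤ, n ≠ 0 → f.c n = 0) ∧ f.c 0 ∈ Subring.center A ∧ σ (f.c 0) = f.c 0 := by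
  rw [Subring.mem_center_iff]
  constructor
  · intro h
    have key : ∀ (a : A) (n : ℤ), a * f.c n = f.c n * (σ ^ n) a := by
      intro a n
      have := congrArg (fun g => SLS.c g n) (h (Cmap a))
      simpa [Cmap_mul_c, mul_Cmap_c] using this
    have hT : ∀ k : ℤ, σ (f.c k) = f.c k := by
      intro k
      have := congrArg (fun g => SLS.c g (k + 1)) (h T)
      simpa [T_mul_c, mul_T_c] using this
    refine ⟨?_, ?_, hT 0⟩
    · intro n hn
      obtain ⟨z, hz, hzn⟩ := hσ n hn
      have h1 := key z n
      rw [Subring.mem_center_iff] at hz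
      rw [← hz (f.c n)] at h1
      by_contra hfn
      exact hzn (mul_left_cancel₀ hfn h1).symm
    · rw [Subring.mem_center_iff]
      intro a
      have := key a 0
      simpa using this
  · rintro ⟨h1, h2, h3⟩ g
    ext n
    rw [mul_c, mul_c]
    rw [finsum_eq_single _ n (fun i hi => by
      rw [h1 (n - i) (by omega), map_zero, mul_zero]), sub_self]
    rw [finsum_eq_single _ 0 (fun i hi => by rw [h1 i hi, zero_mul]), sub_zero]
    rw [zpow_fixed h3, zpow_zero]
    rw [Subring.mem_center_iff] at h2
    simp [h2 (g.c n)]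

theorem eq_Cmap_of_c_eq_zero {f : SLS A σ} (h : ∀ n : ℤ, n ≠ 0 → f.c n = 0) :
    f = Cmap (f.c 0) := by
  ext n
  by_cases hn : n = 0
  · simp [hn]
  · simp [hn, h n hn]

end Center

section Transcendence

variable (u v : A)

/-- `u + v·t`. -/
def W : SLS A σ := Cmap u + Cmap v * T

theorem W_c (n : ℤ) : (W u v : SLS A σ).c n =
    if n = 0 then u else if n = 1 then v else 0 := by
  rw [W, add_c, mul_T_c]
  by_cases h0 : n = 0
  · simp [h0]
  · by_cases h1 : n = 1
    · simp [h0, h1]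
    · simp [h0, h1, show n - 1 ≠ 0 from by omega]

theorem W_pow_c_low (k : ℕ) : ∀ n : ℤ, n < 0 → ((W u v : SLS A σ) ^ k).c n = 0 := by
  induction k with
  | zero =>
      intro n hn
      rw [pow_zero, one_c, if_neg (by omega)]
  | succ k ih =>
      intro n hn
      rw [pow_succ, mul_c]
      apply finsum_eq_zero_of_forall_eq_zero
      intro i
      by_cases hi : i < 0
      · rw [ih i hi, zero_mul]
      · rw [W_c, if_neg (by omega), if_neg (by omega), map_zero, mul_zero]

theorem W_pow_c_high (k : ℕ) : ∀ n : ℤ, (k : ℤ) < n → ((W u v : SLS A σ) ^ k).c n = 0 := by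
  induction k with
  | zero =>
      intro n hn
      rw [pow_zero, one_c, if_neg (by omega)]
  | succ k ih =>
      intro n hn
      rw [pow_succ, mul_c]
      apply finsum_eq_zero_of_forall_eq_zero
      intro i
      by_cases hi : (k : ℤ) < i
      · rw [ih i hi, zero_mul]
      · rw [W_c, if_neg (by push_cast at hn ⊢; omega), if_neg (by push_cast at hn ⊢; omega),
          map_zero, mul_zero]

theorem W_pow_c_diag (hv : σ v = v) (k : ℕ) : ((W u v : SLS A σ) ^ k).c k = v ^ k := by
  induction k with
  | zero => rw [pow_zero, one_c]; simp
  | succ k ih =>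
      rw [pow_succ, mul_c]
      rw [finsum_eq_single _ (k : ℤ) (fun i hi => ?_)]
      · have he : ((k + 1 : ℕ) : ℤ) - (k : ℤ) = 1 := by push_cast; omega
        rw [he, W_c, if_neg one_ne_zero, if_pos rfl, ih, zpow_fixed hv, pow_succ]
      · by_cases h1 : (k : ℤ) < i
        · rw [W_pow_c_high u v k i h1, zero_mul]
        · rw [W_c, if_neg (by push_cast; omega), if_neg (by push_cast; omega), map_zero, mul_zero]

/-- Coefficient extraction as an additive monoid hom. -/
def cHom (n : ℤ) : SLS A σ →+ A where
  toFun f := f.c n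
  map_zero' := rfl
  map_add' _ _ := rfl

theorem not_algebraic (hσ : ∀ n : ℤ, n ≠ 0 → ∃ z ∈ Subring.center A, (σ ^ n) z ≠ z)
    (hv : σ v = v) (hvne : v ≠ 0) :
    ¬ ∃ p : Polynomial (SLS A σ), p ≠ 0 ∧ (∀ i, p.coeff i ∈ Subring.center (SLS A σ)) ∧
        Polynomial.eval (W u v) p = 0 := by
  rintro ⟨p, hp, hc, heval⟩
  set N := p.natDegree with hN
  have hlc : p.coeff N ≠ 0 := fun h => hp (Polynomial.leadingCoeff_eq_zero.mp h)
  have hNsupp : N ∈ p.support := Polynomial.mem_support_iff.mpr hlc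
  have hkey : (Polynomial.eval (W u v) p).c N = ((p.coeff N).c 0) * v ^ N := by
    rw [Polynomial.eval_eq_sum, Polynomial.sum_def]
    have hms := map_sum (cHom (N : ℤ)) (fun n => p.coeff n * (W u v : SLS A σ) ^ n) p.support
    change (cHom ((N : ℕ) : ℤ)) _ = _
    rw [hms]
    have hterm : ∀ i ∈ p.support,
        (cHom ((N : ℕ) : ℤ)) (p.coeff i * (W u v : SLS A σ) ^ i) =
          if i = N then ((p.coeff N).c 0) * v ^ N else 0 := by
      intro i hi
      have hiN : i ≤ N := Polynomial.le_natDegree_of_mem_supp i hi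
      obtain ⟨h1, h2, h3⟩ := (mem_center_iff hσ (p.coeff i)).mp (hc i)
      have hrepr : p.coeff i = Cmap ((p.coeff i).c 0) := eq_Cmap_of_c_eq_zero h1
      show (p.coeff i * (W u v : SLS A σ) ^ i).c N = _
      rw [hrepr, Cmap_mul_c]
      by_cases hiN' : i = N
      · subst hiN'
        rw [if_pos rfl, W_pow_c_diag u v hv]
      · rw [if_neg hiN', W_pow_c_high u v i N (by
          have : i < N := lt_of_le_of_ne hiN hiN'
          exact_mod_cast this), mul_zero]
    rw [Finset.sum_congr rfl hterm, Finset.sum_ite_eq' p.support N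
      (fun _ => ((p.coeff N).c 0) * v ^ N), if_pos hNsupp]
  have ha : (p.coeff N).c 0 ≠ 0 := by
    intro h
    obtain ⟨h1, _, _⟩ := (mem_center_iff hσ (p.coeff N)).mp (hc N)
    exact hlc (by rw [eq_Cmap_of_c_eq_zero h1, h, map_zero])
  rw [heval] at hkey
  exact mul_ne_zero ha (pow_ne_zero N hvne) (hkey.symm.trans (zero_c _))

end Transcendence

end SLS

noncomputable section Level3

namespace SLS3

open HahnSeries

variable (D : Type) [DivisionRing D]

instance hahnDR : DivisionRing (HahnSeries ℚ D) := SLS1.hahnDivisionRing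

/-- The doubling map on `ℚ` as an `AddMonoidHom`. -/
def dblAdd : ℚ →+ ℚ := AddMonoidHom.mulLeft (2 : ℚ)

/-- The halving map on `ℚ` as an `AddMonoidHom`. -/
def hlvAdd : ℚ →+ ℚ := AddMonoidHom.mulLeft (1/2 : ℚ)

theorem dblAdd_inj : Function.Injective (dblAdd) := fun a b h => by
  have : (2:ℚ) * a = 2 * b := h
  exact mul_left_cancel₀ two_ne_zero this

theorem hlvAdd_inj : Function.Injective (hlvAdd) := fun a b h => by
  have : (1/2:ℚ) * a = (1/2) * b := h
  exact mul_left_cancel₀ (by norm_num) this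

theorem dblAdd_mono : ∀ g g' : ℚ, dblAdd g ≤ dblAdd g' ↔ g ≤ g' := fun g g' => by
  show (2:ℚ) * g ≤ 2 * g' ↔ g ≤ g'
  constructor <;> intro h <;> linarith

theorem hlvAdd_mono : ∀ g g' : ℚ, hlvAdd g ≤ hlvAdd g' ↔ g ≤ g' := fun g g' => by
  show (1/2:ℚ) * g ≤ (1/2) * g' ↔ g ≤ g'
  constructor <;> intro h <;> linarith

/-- Doubling of exponents as a ring hom of Hahn series. -/
def dbl : HahnSeries ℚ D →+* HahnSeries ℚ D :=
  embDomainRingHom dblAdd dblAdd_inj dblAdd_mono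

/-- Halving of exponents as a ring hom of Hahn series. -/
def hlv : HahnSeries ℚ D →+* HahnSeries ℚ D :=
  embDomainRingHom hlvAdd hlvAdd_inj hlvAdd_mono

theorem dbl_single (γ : ℚ) (r : D) : dbl D (single γ r) = single (2 * γ) r := by
  show embDomain _ _ = _
  rw [embDomain_single]
  rfl

theorem hlv_single (γ : ℚ) (r : D) : hlv D (single γ r) = single ((1/2) * γ) r := by
  show embDomain _ _ = _
  rw [embDomain_single]
  rfl

theorem dbl_coeff (x : HahnSeries ℚ D) (γ : ℚ) : (dbl D x).coeff (2 * γ) = x.coeff γ := by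
  show (embDomain _ _).coeff _ = _
  exact embDomain_coeff

theorem hlv_coeff (x : HahnSeries ℚ D) (γ : ℚ) : (hlv D x).coeff ((1/2) * γ) = x.coeff γ := by
  show (embDomain _ _).coeff _ = _
  exact embDomain_coeff

theorem hlv_dbl (x : HahnSeries ℚ D) : hlv D (dbl D x) = x := by
  ext γ
  have h := hlv_coeff D (dbl D x) (2 * γ)
  rw [show (1/2 : ℚ) * (2 * γ) = γ from by ring] at h
  rw [h, dbl_coeff]

theorem dbl_hlv (x : HahnSeries ℚ D) : dbl D (hlv D x) = x := by
  ext γ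
  have h := dbl_coeff D (hlv D x) ((1/2) * γ)
  rw [show (2 : ℚ) * ((1/2) * γ) = γ from by ring] at h
  rw [h, hlv_coeff]

/-- The exponent-doubling ring automorphism of `HahnSeries ℚ D`. -/
def σ : RingAut (HahnSeries ℚ D) :=
  RingEquiv.ofRingHom (dbl D) (hlv D)
    (RingHom.ext fun x => dbl_hlv D x) (RingHom.ext fun x => hlv_dbl D x)

theorem σ_apply (x : HahnSeries ℚ D) : σ D x = dbl D x := rfl
theorem σ_symm_apply (x : HahnSeries ℚ D) : (σ D)⁻¹ x = hlv D x := rfl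

theorem σ_C (d : D) : σ D (HahnSeries.C d) = HahnSeries.C d := by
  rw [σ_apply]
  exact embDomainRingHom_C

theorem σ_zpow_single (n : ℤ) (γ : ℚ) (r : D) :
    ((σ D) ^ n) (single γ r) = single ((2:ℚ) ^ n * γ) r := by
  induction n using Int.induction_on with
  | zero => simp
  | succ k ih =>
      rw [show ((k:ℤ) + 1) = 1 + k from by omega, ← SLS.zpow_apply_apply (σ D) 1 k,
        ih, zpow_one, σ_apply, dbl_single]
      congr 1
      rw [zpow_add₀ (two_ne_zero) 1 k, zpow_one]
      ring
  | pred k ih =>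
      rw [show (-(k:ℤ) - 1) = -1 + -k from by omega, ← SLS.zpow_apply_apply (σ D) (-1) (-k),
        ih, zpow_neg_one, σ_symm_apply, hlv_single]
      congr 1
      rw [zpow_add₀ (two_ne_zero : (2:ℚ) ≠ 0) (-1 : ℤ) (-(k:ℤ)), zpow_neg_one]
      ring

/-- `X = x¹`, a central element of `HahnSeries ℚ D` moved by all powers of `σ`. -/
def X : HahnSeries ℚ D := single (1 : ℚ) (1 : D)

theorem mul_single_coeff' (x : HahnSeries ℚ D) (b : ℚ) (r : D) (g : ℚ) :
    (x * single b r).coeff g = x.coeff (g - b) * r := by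
  have h := coeff_mul_single_add (x := x) (r := r) (a := g - b) (b := b)
  rwa [sub_add_cancel] at h

theorem single_mul_coeff' (x : HahnSeries ℚ D) (b : ℚ) (r : D) (g : ℚ) :
    ((single b r : HahnSeries ℚ D) * x).coeff g = r * x.coeff (g - b) := by
  have h := coeff_single_mul_add (x := x) (r := r) (a := g - b) (b := b)
  rwa [sub_add_cancel] at h

theorem X_comm (x : HahnSeries ℚ D) : x * X D = X D * x := by
  ext g
  rw [X, mul_single_coeff', single_mul_coeff', mul_one, one_mul]

theorem X_mem_center : X D ∈ Subring.center (HahnSeries ℚ D) :=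
  Subring.mem_center_iff.mpr fun g => X_comm D g

theorem σ_zpow_X_ne (n : ℤ) (hn : n ≠ 0) : ((σ D) ^ n) (X D) ≠ X D := by
  rw [X, σ_zpow_single, mul_one]
  intro h
  have h2n : (2:ℚ) ^ n ≠ 1 := by
    intro h1
    exact hn (zpow_right_injective₀ (two_pos) (by norm_num) (h1.trans (zpow_zero (2:ℚ)).symm))
  have := congrArg (fun y : HahnSeries ℚ D => y.coeff ((2:ℚ) ^ n)) h
  simp only [coeff_single_same, coeff_single] at this
  rw [if_neg h2n] at this
  exact one_ne_zero this

theorem hσ : ∀ n : ℤ, n ≠ 0 → ∃ z ∈ Subring.center (HahnSeries ℚ D), ((σ D) ^ n) z ≠ z :=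
  fun n hn => ⟨X D, X_mem_center D, σ_zpow_X_ne D n hn⟩

theorem C_mem_center {d : D} (hd : d ∈ Subring.center D) :
    (HahnSeries.C d : HahnSeries ℚ D) ∈ Subring.center (HahnSeries ℚ D) := by
  rw [Subring.mem_center_iff] at hd ⊢
  intro x
  ext g
  rw [C_apply, coeff_single_zero_mul, coeff_mul_single_zero, hd]

theorem coeff_mem_center {x : HahnSeries ℚ D} (hx : x ∈ Subring.center (HahnSeries ℚ D)) (γ : ℚ) :
    x.coeff γ ∈ Subring.center D := by
  rw [Subring.mem_center_iff] at hx ⊢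
  intro r
  have := congrArg (fun y : HahnSeries ℚ D => y.coeff γ) (hx (HahnSeries.C r))
  simpa [C_apply, coeff_single_zero_mul, coeff_mul_single_zero] using this

theorem fixed_supported_at_zero {x : HahnSeries ℚ D} (hx : σ D x = x) (γ : ℚ) (hγ : γ ≠ 0) :
    x.coeff γ = 0 := by
  have hrel : ∀ q : ℚ, x.coeff (2 * q) = x.coeff q := by
    intro q
    conv_lhs => rw [← hx]
    rw [σ_apply, dbl_coeff]
  by_contra h
  set seq : ℕ → ℚ := fun k => if γ < 0 then 2 ^ k * γ else γ / 2 ^ k with hseq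
  have hmem : ∀ k, x.coeff (seq k) = x.coeff γ := by
    intro k
    induction k with
    | zero => simp [hseq]
    | succ k ih =>
        by_cases hγneg : γ < 0
        · have : seq (k+1) = 2 * seq k := by
            simp only [hseq, if_pos hγneg]
            ring
          rw [this, hrel, ih]
        · have : seq k = 2 * seq (k+1) := by
            simp only [hseq, if_neg hγneg]
            field_simp
            ring
          rw [← ih, this, hrel]
  have hanti : StrictAnti seq := by
    apply strictAnti_nat_of_succ_lt
    intro k
    by_cases hγneg : γ < 0
    · simp only [hseq, if_pos hγneg]
      have h2 : (0:ℚ) < 2 ^ k := by positivity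
      have : (2:ℚ) ^ (k+1) = 2 * 2 ^ k := by ring
      rw [this]
      nlinarith
    · have hγpos : 0 < γ := lt_of_le_of_ne (not_lt.mp hγneg) (Ne.symm hγ)
      simp only [hseq, if_neg hγneg]
      have h2 : (0:ℚ) < 2 ^ k := by positivity
      rw [div_lt_div_iff₀ (by positivity) (by positivity)]
      have : (2:ℚ) ^ (k+1) = 2 * 2 ^ k := by ring
      rw [this]
      nlinarith
  have hwf := x.isWF_support
  rw [Set.isWF_iff_no_descending_seq] at hwf
  exact hwf seq hanti (fun n => by
    show x.coeff (seq n) ≠ 0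
    rw [hmem n]
    exact h)

theorem central_fixed_eq_C {x : HahnSeries ℚ D} (hx : x ∈ Subring.center (HahnSeries ℚ D))
    (hfix : σ D x = x) :
    ∃ d ∈ Subring.center D, x = HahnSeries.C d := by
  refine ⟨x.coeff 0, coeff_mem_center D hx 0, ?_⟩
  ext γ
  rw [C_apply, coeff_single]
  by_cases hγ : γ = 0
  · rw [if_pos hγ, hγ]
  · rw [if_neg hγ, fixed_supported_at_zero D hfix γ hγ]

end SLS3

/-- Main construction. -/
theorem main_construction (D : Type) [DivisionRing D] :
    ∃ (E : Type) (_ : DivisionRing E) (ι : D →+* E) (t : E),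
      Function.Injective ι ∧ t ≠ 0 ∧
      (∀ a : D, t * ι a = ι a * t) ∧
      Subring.center E = (Subring.center D).map ι ∧
      ∀ u v : D, v ≠ 0 →
        ¬ ∃ p : Polynomial E, p ≠ 0 ∧ (∀ i, p.coeff i ∈ Subring.center E) ∧
            Polynomial.eval (ι u + ι v * t) p = 0 := by
  classical
  set A := HahnSeries ℚ D
  set σ := SLS3.σ D
  refine ⟨SLS A σ, inferInstance, (SLS.Cmap : A →+* SLS A σ).comp (HahnSeries.C : D →+* A),
    SLS.T, ?_, SLS.T_ne_zero, ?_, ?_, ?_⟩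
  · exact SLS.Cmap_injective.comp HahnSeries.C_injective
  · intro a
    exact SLS.T_comm _ (SLS3.σ_C D a)
  · ext x
    rw [SLS.mem_center_iff (SLS3.hσ D) x, Subring.mem_map]
    constructor
    · rintro ⟨h1, h2, h3⟩
      have hrepr : x = SLS.Cmap (x.c 0) := SLS.eq_Cmap_of_c_eq_zero h1
      obtain ⟨d, hd, hCd⟩ := SLS3.central_fixed_eq_C D h2 h3
      exact ⟨d, hd, by rw [RingHom.comp_apply, ← hCd, ← hrepr]⟩
    · rintro ⟨d, hd, rfl⟩
      rw [RingHom.comp_apply]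
      refine ⟨fun n hn => by simp [SLS.Cmap_c, hn], ?_, ?_⟩
      · simpa [SLS.Cmap_c, -HahnSeries.C_apply] using SLS3.C_mem_center D hd
      · simpa [SLS.Cmap_c, -HahnSeries.C_apply] using SLS3.σ_C D d
  · intro u v hv
    have := SLS.not_algebraic (σ := σ) (HahnSeries.C u) (HahnSeries.C v) (SLS3.hσ D)
      (SLS3.σ_C D v) (by
        intro h
        exact hv (by
          have := congrArg (fun y : HahnSeries ℚ D => y.coeff 0) h
          simpa [HahnSeries.C_apply, HahnSeries.coeff_single_same] using this))
    rw [SLS.W] at this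
    exact this

end Level3


/-- Let `D` be a division ring with center `F = Z(D)`. Then there is a division ring `E`,
an injective ring homomorphism `ι : D → E`, and a nonzero `t ∈ E` such that
(i) `t` commutes with the image of `D`; (ii) the center of `E` is exactly `ι(F)`; and
(iii) for all `u v ∈ D` with `v ≠ 0`, the element `ι(u) + ι(v)·t` is not algebraic over
the center of `E`. -/
theorem exists_extension_center_eq_and_not_algebraic
    (D : Type) [DivisionRing D] :
    ∃ (E : Type) (_ : DivisionRing E) (ι : D →+* E) (t : E),
      Function.Injective ι ∧ t ≠ 0 ∧
      (∀ a : D, t * ι a = ι a * t) ∧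
      Subring.center E = (Subring.center D).map ι ∧
      ∀ u v : D, v ≠ 0 →
        ¬ ∃ p : Polynomial E, p ≠ 0 ∧ (∀ i, p.coeff i ∈ Subring.center E) ∧
            Polynomial.eval (ι u + ι v * t) p = 0 :=
  main_construction D
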